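/- A graph G contains no induced wheel and no induced antiwheel if and only if G contains no induced wheel on at most seven vertices and no induced antiwheel on at most seven vertices. -/

import Mathlib

open SimpleGraph

/-- `G` contains an induced copy of `H`. -/
def ContainsInduced {V W : Type*} (G : SimpleGraph V) (H : SimpleGraph W) : Prop :=
  ∃ f : W ↪ V, ∀ u v, G.Adj (f u) (f v) ↔ H.Adj u v

/-- The path on 5 vertices. -/
def path5 : SimpleGraph (Fin 5) :=
  SimpleGraph.fromRel (fun i j => (i : ℕ) + 1 = (j : ℕ))

/-- Two disjoint edges. -/
def twoK2 : SimpleGraph (Fin 4) :=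
  SimpleGraph.fromRel (fun i j => (i = 0 ∧ j = 1) ∨ (i = 2 ∧ j = 3))

/-- The cycle on `n` vertices (for `n ≥ 3`). -/
def cycG (n : ℕ) : SimpleGraph (Fin n) :=
  SimpleGraph.fromRel (fun i j => ((i : ℕ) + 1) % n = (j : ℕ))

/-- `G` contains an induced wheel: an induced (chordless) cycle of length at least 4
plus a vertex with at least three neighbors on the cycle. -/
def ContainsWheel {V : Type*} (G : SimpleGraph V) : Prop :=
  ∃ n : ℕ, 4 ≤ n ∧ ∃ (f : Fin n ↪ V) (hub : V),
    (∀ i, hub ≠ f i) ∧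
    (∀ i j, G.Adj (f i) (f j) ↔ (cycG n).Adj i j) ∧
    3 ≤ {i : Fin n | G.Adj hub (f i)}.ncard

/-- `G` contains an induced wheel on at most `k` vertices. -/
def ContainsWheelLE {V : Type*} (G : SimpleGraph V) (k : ℕ) : Prop :=
  ∃ n : ℕ, 4 ≤ n ∧ n + 1 ≤ k ∧ ∃ (f : Fin n ↪ V) (hub : V),
    (∀ i, hub ≠ f i) ∧
    (∀ i j, G.Adj (f i) (f j) ↔ (cycG n).Adj i j) ∧
    3 ≤ {i : Fin n | G.Adj hub (f i)}.ncard

/-- `s` is the vertex set of a hole (induced cycle of length at least 4) of `G`. -/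
def IsHoleSet {V : Type*} (G : SimpleGraph V) (s : Set V) : Prop :=
  ∃ n : ℕ, 4 ≤ n ∧ ∃ f : Fin n ↪ V, Set.range f = s ∧
    ∀ i j, G.Adj (f i) (f j) ↔ (cycG n).Adj i j

/-- `G` is a split graph: its vertex set partitions into a stable set and a clique. -/
def IsSplit {V : Type*} (G : SimpleGraph V) : Prop :=
  ∃ S K : Set V, (∀ v, v ∈ S ∨ v ∈ K) ∧ S ∩ K = ∅ ∧
    (∀ u ∈ S, ∀ v ∈ S, ¬G.Adj u v) ∧ G.IsClique K


lemma cycAdj {n : ℕ} (a b : Fin n) :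
    (cycG n).Adj a b ↔ (a : ℕ) ≠ (b : ℕ) ∧
      (((a : ℕ) + 1) % n = (b : ℕ) ∨ ((b : ℕ) + 1) % n = (a : ℕ)) := by
  simp [cycG, SimpleGraph.fromRel_adj, Fin.ext_iff, ne_eq]

lemma hole7 {V : Type*} (G : SimpleGraph V) {n : ℕ} (hn : 7 ≤ n) (f : Fin n ↪ V)
    (hf : ∀ i j, G.Adj (f i) (f j) ↔ (cycG n).Adj i j) : ContainsWheelLE Gᶜ 7 := by
  have h1 : 1 % n = 1 := Nat.mod_eq_of_lt (by omega)
  have h2 : 2 % n = 2 := Nat.mod_eq_of_lt (by omega)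
  have h4 : 4 % n = 4 := Nat.mod_eq_of_lt (by omega)
  have h5 : 5 % n = 5 := Nat.mod_eq_of_lt (by omega)
  have h6 : 6 % n = 6 := Nat.mod_eq_of_lt (by omega)
  set idx : Fin 4 → Fin n := ![⟨0, by omega⟩, ⟨3, by omega⟩, ⟨1, by omega⟩, ⟨4, by omega⟩] with hidx
  have e0 : (idx 0 : ℕ) = 0 := rfl
  have e1 : (idx 1 : ℕ) = 3 := rfl
  have e2 : (idx 2 : ℕ) = 1 := rfl
  have e3 : (idx 3 : ℕ) = 4 := rfl
  have hinj : Function.Injective idx := by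
    intro a b h
    have h' : (idx a : ℕ) = (idx b : ℕ) := congrArg Fin.val h
    fin_cases a <;> fin_cases b <;> simp_all [e0, e1, e2, e3, Fin.ext_iff]
  have hne : ∀ x y : Fin n, f x ≠ f y ↔ (x : ℕ) ≠ (y : ℕ) := by
    intro x y
    rw [f.injective.ne_iff, Fin.ne_iff_vne]
  refine ⟨4, le_refl 4, by norm_num, ⟨fun i => f (idx i), fun a b h => hinj (f.injective h)⟩,
    f ⟨5, by omega⟩, ?_, ?_, ?_⟩
  · intro i h
    have h' : (5 : ℕ) = (idx i : ℕ) := congrArg Fin.val (f.injective h)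
    fin_cases i <;> simp_all [e0, e1, e2, e3]
  · intro i j
    have key : ∀ x y : Fin n, Gᶜ.Adj (f x) (f y) ↔ (x : ℕ) ≠ (y : ℕ) ∧
        ¬ (((x : ℕ) + 1) % n = (y : ℕ) ∨ ((y : ℕ) + 1) % n = (x : ℕ)) := by
      intro x y
      rw [SimpleGraph.compl_adj, hf, cycAdj, hne]
      constructor
      · rintro ⟨hxy, hc⟩
        exact ⟨hxy, fun hh => hc ⟨hxy, hh⟩⟩
      · rintro ⟨hxy, hc⟩
        exact ⟨hxy, fun hh => hc hh.2⟩
    show Gᶜ.Adj (f (idx i)) (f (idx j)) ↔ _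
    fin_cases i <;> fin_cases j <;>
      simp [key, cycAdj, e0, e1, e2, e3, h1, h2, h4, h5, h6] <;> omega
  · have hset : {i : Fin 4 | Gᶜ.Adj (f ⟨5, by omega⟩) (f (idx i))} =
        ↑({0, 1, 2} : Finset (Fin 4)) := by
      ext i
      simp only [Set.mem_setOf_eq, SimpleGraph.compl_adj, hf, cycAdj, hne]
      fin_cases i <;> simp [e0, e1, e2, e3, h1, h2, h4, h5, h6]
    show 3 ≤ {i : Fin 4 | Gᶜ.Adj (f ⟨5, by omega⟩) (f (idx i))}.ncard
    rw [hset, Set.ncard_coe_finset]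
    decide

lemma wheel_imp {V : Type*} (G : SimpleGraph V) (h : ContainsWheel G) :
    ContainsWheelLE G 7 ∨ ContainsWheelLE Gᶜ 7 := by
  obtain ⟨n, hn4, f, hub, hhub, hadj, hcard⟩ := h
  by_cases hn7 : n + 1 ≤ 7
  · exact Or.inl ⟨n, hn4, hn7, f, hub, hhub, hadj, hcard⟩
  · exact Or.inr (hole7 G (by omega) f hadj)

lemma wheelLE_imp {V : Type*} (G : SimpleGraph V) (h : ContainsWheelLE G 7) :
    ContainsWheel G := by
  obtain ⟨n, hn4, _, f, hub, hhub, hadj, hcard⟩ := h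
  exact ⟨n, hn4, f, hub, hhub, hadj, hcard⟩

theorem stmt_14 {V : Type*} [Fintype V] (G : SimpleGraph V) :
    (¬ContainsWheel G ∧ ¬ContainsWheel Gᶜ) ↔
      (¬ContainsWheelLE G 7 ∧ ¬ContainsWheelLE Gᶜ 7) := by
  constructor
  · rintro ⟨h1, h2⟩
    exact ⟨fun h => h1 (wheelLE_imp G h), fun h => h2 (wheelLE_imp Gᶜ h)⟩
  · rintro ⟨h1, h2⟩
    constructor
    · intro h
      rcases wheel_imp G h with h' | h'
      · exact h1 h'
      · exact h2 h'
    · intro h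
      rcases wheel_imp Gᶜ h with h' | h'
      · exact h2 h'
      · rw [compl_compl] at h'
        exact h1 h'
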